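/- The value p_b° = sqrt( p_c·Σ_{i∈I} k1^i / Σ_{i∈I}(q·F^i·η^i + 1/b1^i) ) is the unique global maximizer of the APG's anticipated profit L̃ on (0, ∞): L̃(p_b°) ≥ L̃(p) for every p > 0, with equality only when p = p_b°. -/

import Mathlib

open Real Set

/-- The APG's anticipated profit under CCHP best responses. -/
noncomputable def apgProfit {ι : Type*} (I : Finset ι) (q : ℝ) (F η k1 b1 : ι → ℝ)
    (p_s p_c R : ℝ) (p : ℝ) : ℝ :=
  (p_c - p) * ∑ i ∈ I, (q * F i * η i - (k1 i / p - 1 / b1 i)) + (p_s - p_c) * R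

/-- `p_b° = sqrt(p_c·Σ k1^i / Σ (q·F^i·η^i + 1/b1^i))` is the unique global
maximizer of the anticipated profit `L̃` on `(0, ∞)`. -/
theorem stmt_7 {ι : Type*} (I : Finset ι) (hI : I.Nonempty)
    (q : ℝ) (hq : 0 < q) (F η k1 b1 : ι → ℝ)
    (hF : ∀ i ∈ I, 0 < F i) (hη : ∀ i ∈ I, 0 < η i)
    (hk1 : ∀ i ∈ I, 0 < k1 i) (hb1 : ∀ i ∈ I, 0 < b1 i)
    (p_c : ℝ) (hpc : 0 < p_c) (p_s R : ℝ) :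
    ∀ p : ℝ, 0 < p →
      apgProfit I q F η k1 b1 p_s p_c R p
        ≤ apgProfit I q F η k1 b1 p_s p_c R
            (Real.sqrt (p_c * (∑ i ∈ I, k1 i) /
              ∑ i ∈ I, (q * F i * η i + 1 / b1 i))) ∧
      (apgProfit I q F η k1 b1 p_s p_c R p
        = apgProfit I q F η k1 b1 p_s p_c R
            (Real.sqrt (p_c * (∑ i ∈ I, k1 i) /
              ∑ i ∈ I, (q * F i * η i + 1 / b1 i))) →
        p = Real.sqrt (p_c * (∑ i ∈ I, k1 i) /
              ∑ i ∈ I, (q * F i * η i + 1 / b1 i))) := by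
  intro p hp
  set A : ℝ := ∑ i ∈ I, (q * F i * η i + 1 / b1 i) with hAdef
  set K : ℝ := ∑ i ∈ I, k1 i with hKdef
  have hA : 0 < A := Finset.sum_pos (fun i hi => by
    have := hF i hi; have := hη i hi; have := hb1 i hi; positivity) hI
  have hK : 0 < K := Finset.sum_pos (fun i hi => hk1 i hi) hI
  set p0 : ℝ := Real.sqrt (p_c * K / A) with hp0def
  have hp0 : 0 < p0 := Real.sqrt_pos.2 (by positivity)
  have hp0sq : A * p0 ^ 2 = p_c * K := by
    rw [hp0def, Real.sq_sqrt (by positivity)]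
    field_simp
  have hform : ∀ r : ℝ, r ≠ 0 → apgProfit I q F η k1 b1 p_s p_c R r
      = (p_c - r) * (A - K / r) + (p_s - p_c) * R := by
    intro r hr
    unfold apgProfit
    rw [hAdef, hKdef]
    rw [Finset.sum_congr rfl (g := fun i => (q * F i * η i + 1 / b1 i) - k1 i / r)
      (fun i _ => by ring), Finset.sum_sub_distrib, ← Finset.sum_div]
  have hdiff : apgProfit I q F η k1 b1 p_s p_c R p0
      - apgProfit I q F η k1 b1 p_s p_c R p = A * (p - p0) ^ 2 / p := by
    rw [hform p hp.ne', hform p0 hp0.ne']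
    field_simp
    linear_combination (p - p0) * hp0sq
  constructor
  · nlinarith [sq_nonneg (p - p0), div_nonneg (mul_nonneg hA.le (sq_nonneg (p - p0))) hp.le]
  · intro heq
    have h0 : A * (p - p0) ^ 2 / p = 0 := by rw [← hdiff, heq]; ring
    have : (p - p0) ^ 2 = 0 := by
      by_contra h
      have : 0 < (p - p0) ^ 2 := lt_of_le_of_ne (sq_nonneg _) (Ne.symm h)
      have := div_pos (mul_pos hA this) hp
      linarith
    have := pow_eq_zero_iff (n := 2) (by norm_num) |>.1 this
    linarith
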